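/- Let x_1 ∈ (0,1) be a dyadic rational and let x_n = 1/2^{n-1} for n ≥ 2. Then the range of the cardinal function of (x_n)_{n≥1} is exactly {1,2,3,4}. -/

import Mathlib

open Set

/-- The achievement set of a sequence: all subsums. -/
noncomputable def achSet (x : ℕ → ℝ) : Set ℝ :=
  {t | ∃ S : Set ℕ, ∑' n : S, x n = t}

/-- The cardinal function: the number of representations of `t` as a subsum. -/
noncomputable def cardFun (x : ℕ → ℝ) (t : ℝ) : Cardinal :=
  Cardinal.mk {S : Set ℕ // ∑' n : S, x n = t}

/-- The tail sum `r_k = ∑_{n > k} x n`. -/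
noncomputable def tailSum (x : ℕ → ℝ) (k : ℕ) : ℝ := ∑' n, x (k + 1 + n)

/-- Prepending a term to a sequence. -/
def prepend (y : ℝ) (x : ℕ → ℝ) : ℕ → ℝ := fun n =>
  match n with
  | 0 => y
  | Nat.succ m => x m

/-- A dyadic rational in `[0,∞)`: a number of the form `k / 2^m`. -/
def IsDyadic (t : ℝ) : Prop := ∃ k m : ℕ, t = (k : ℝ) / 2 ^ m

namespace S8
open scoped Classical

noncomputable def y : ℕ → ℝ := fun n => 1 / 2 ^ (n + 1)

lemma y_pos (n : ℕ) : 0 < y n := by unfold y; positivity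

lemma y_eq (n : ℕ) : y n = (1/2:ℝ)^n * (1/2) := by
  unfold y; rw [div_pow, one_pow, pow_succ]; ring

lemma summable_y : Summable y := by
  have := summable_geometric_two.mul_right (1/2:ℝ)
  exact this.congr fun n => (y_eq n).symm

lemma sum_y : ∑' n, y n = 1 := by
  calc ∑' n, y n = ∑' n, (1/2:ℝ)^n * (1/2) := tsum_congr y_eq
  _ = (∑' n, (1/2:ℝ)^n) * (1/2) := tsum_mul_right
  _ = 1 := by rw [tsum_geometric_two]; norm_num

noncomputable def d (T : Set ℕ) : ℝ := ∑' n, T.indicator y n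

lemma sumInd (T : Set ℕ) : Summable (T.indicator y) := summable_y.indicator T

lemma d_nonneg (T : Set ℕ) : 0 ≤ d T :=
  tsum_nonneg fun n => Set.indicator_nonneg (fun m _ => (y_pos m).le) n

lemma d_union {T U : Set ℕ} (h : Disjoint T U) : d (T ∪ U) = d T + d U := by
  unfold d
  rw [indicator_union_of_disjoint h, Summable.tsum_add (sumInd T) (sumInd U)]

lemma d_empty : d ∅ = 0 := by unfold d; simp

lemma d_univ : d univ = 1 := by unfold d; simp [sum_y]

lemma d_singleton (k : ℕ) : d {k} = y k := by
  unfold d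
  rw [← tsum_subtype, tsum_singleton]

lemma d_mono {T U : Set ℕ} (h : T ⊆ U) : d T ≤ d U := by
  refine Summable.tsum_le_tsum (fun n => ?_) (sumInd T) (sumInd U)
  exact Set.indicator_le_indicator_of_subset h (fun m => (y_pos m).le) n

lemma d_diff {T U : Set ℕ} (h : T ⊆ U) : d U = d T + d (U \ T) := by
  rw [← d_union (disjoint_sdiff_right.mono_left le_rfl)]
  · congr 1; rw [union_diff_cancel h]

lemma d_le_one (T : Set ℕ) : d T ≤ 1 := d_univ ▸ d_mono (subset_univ T)

lemma le_d {T : Set ℕ} {n : ℕ} (hn : n ∈ T) : y n ≤ d T := by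
  have := d_mono (singleton_subset_iff.2 hn)
  rwa [d_singleton] at this

lemma d_eq_zero {T : Set ℕ} (h : d T = 0) : T = ∅ := by
  by_contra hne
  obtain ⟨n, hn⟩ := nonempty_iff_ne_empty.2 hne
  exact absurd (h ▸ le_d hn) (not_le.2 (y_pos n))

lemma d_subset_inj {T U : Set ℕ} (h : T ⊆ U) (he : d T = d U) : T = U := by
  have h2 := d_diff h
  have : d (U \ T) = 0 := by linarith
  have := d_eq_zero this
  rw [diff_eq_empty] at this
  exact subset_antisymm h this

lemma d_insert {T : Set ℕ} {k : ℕ} (hk : k ∉ T) : d (insert k T) = y k + d T := by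
  rw [insert_eq, d_union (by simpa using hk), d_singleton]

lemma d_Iic (k : ℕ) : d (Iic k) = 1 - y k := by
  induction k with
  | zero =>
    have : Iic 0 = {0} := by ext n; simp [Nat.le_zero]
    rw [this, d_singleton]; unfold y; norm_num
  | succ k ih =>
    have h1 : Iic (k+1) = insert (k+1) (Iic k) := by
      ext n; simp [Nat.le_succ_iff, Nat.lt_succ_iff, or_comm]
    rw [h1, d_insert (by simp), ih]
    have : y (k+1) = y k * (1/2) := by unfold y; rw [pow_succ]; ring
    rw [this]; ring

lemma d_Ioi (k : ℕ) : d (Ioi k) = y k := by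
  have h1 : (univ : Set ℕ) = Iic k ∪ Ioi k := by ext n; simp [le_or_gt]
  have h2 : Disjoint (Iic k) (Ioi k) := by
    rw [disjoint_left]; intro n h1 h2; exact absurd (mem_Iic.1 h1) (not_le.2 (mem_Ioi.1 h2))
  have := d_univ
  rw [h1, d_union h2, d_Iic] at this
  linarith

/-- Key lemma: two equal subsums agreeing below `k`, with `k` in one but not the other. -/
lemma key {T1 T2 : Set ℕ} (h : d T1 = d T2) {k : ℕ} (hk1 : k ∈ T1) (hk2 : k ∉ T2)
    (hlow : ∀ n < k, (n ∈ T1 ↔ n ∈ T2)) :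
    T1 ∩ Ioi k = ∅ ∧ Ioi k ⊆ T2 := by
  have e1 : T1 = (T1 ∩ Iio k) ∪ ({k} ∪ (T1 ∩ Ioi k)) := by
    ext n; simp only [mem_union, mem_inter_iff, mem_Iio, mem_Ioi, mem_singleton_iff]
    constructor
    · intro hn
      rcases lt_trichotomy n k with h'|h'|h'
      · exact Or.inl ⟨hn, h'⟩
      · exact Or.inr (Or.inl h')
      · exact Or.inr (Or.inr ⟨hn, h'⟩)
    · rintro (⟨hn,_⟩|h'|⟨hn,_⟩) <;> first | exact hn | (subst h'; exact hk1)
  have e2 : T2 = (T2 ∩ Iio k) ∪ (T2 ∩ Ioi k) := by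
    ext n; simp only [mem_union, mem_inter_iff, mem_Iio, mem_Ioi]
    constructor
    · intro hn
      rcases lt_trichotomy n k with h'|h'|h'
      · exact Or.inl ⟨hn, h'⟩
      · exact absurd (h' ▸ hn) hk2
      · exact Or.inr ⟨hn, h'⟩
    · rintro (⟨hn,_⟩|⟨hn,_⟩) <;> exact hn
  have elow : T1 ∩ Iio k = T2 ∩ Iio k := by
    ext n; simp only [mem_inter_iff, mem_Iio]
    exact and_congr_left fun hn => hlow n hn
  have dis1 : Disjoint (T1 ∩ Iio k) ({k} ∪ (T1 ∩ Ioi k)) := by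
    rw [disjoint_left]
    rintro n ⟨_, hn⟩ (h'|⟨_,h'⟩)
    · exact absurd (mem_singleton_iff.1 h' ▸ hn) (lt_irrefl k)
    · exact absurd (hn.trans h') (lt_irrefl n)
  have dis1' : Disjoint ({k} : Set ℕ) (T1 ∩ Ioi k) := by
    rw [disjoint_left]
    rintro n h' ⟨_, h''⟩
    rw [mem_singleton_iff] at h'; rw [mem_Ioi] at h''
    omega
  have dis2 : Disjoint (T2 ∩ Iio k) (T2 ∩ Ioi k) := by
    rw [disjoint_left]
    rintro n ⟨_, hn⟩ ⟨_, h'⟩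
    exact absurd (hn.trans h') (lt_irrefl n)
  have hd1 : d T1 = d (T1 ∩ Iio k) + (y k + d (T1 ∩ Ioi k)) := by
    conv_lhs => rw [e1]
    rw [d_union dis1, d_union dis1', d_singleton]
  have hd2 : d T2 = d (T2 ∩ Iio k) + d (T2 ∩ Ioi k) := by
    conv_lhs => rw [e2]
    exact d_union dis2
  rw [hd1, hd2, ← elow] at h
  have hle : d (T2 ∩ Ioi k) ≤ y k := (d_mono inter_subset_right).trans_eq (d_Ioi k)
  have h0 : d (T1 ∩ Ioi k) = 0 :=
    le_antisymm (by linarith) (d_nonneg _)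
  refine ⟨d_eq_zero h0, ?_⟩
  have : d (T2 ∩ Ioi k) = d (Ioi k) := by rw [d_Ioi]; linarith
  have := d_subset_inj inter_subset_right this
  rw [← this]; exact inter_subset_left


/-- least point of disagreement -/
lemma exists_least_diff {T1 T2 : Set ℕ} (h : T1 ≠ T2) :
    ∃ k, ¬(k ∈ T1 ↔ k ∈ T2) ∧ ∀ n < k, (n ∈ T1 ↔ n ∈ T2) := by
  classical
  have hex : ∃ n, ¬(n ∈ T1 ↔ n ∈ T2) := by
    by_contra hc
    push_neg at hc
    exact h (Set.ext hc)
  exact ⟨Nat.find hex, Nat.find_spec hex, fun n hn => not_not.1 (Nat.find_min hex hn)⟩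

def HasMax (T : Set ℕ) : Prop := ∃ k ∈ T, ∀ n ∈ T, n ≤ k

/-- In a distinct equal-sum pair, the one containing the least disagreement point
has a max; the other contains a full tail. -/
lemma pair_structure {T1 T2 : Set ℕ} (h : d T1 = d T2) (hne : T1 ≠ T2) :
    ∃ k, ((k ∈ T1 ∧ (∀ n ∈ T1, n ≤ k) ∧ Ioi k ⊆ T2 ∧ k ∉ T2 ∧ ∀ n < k, (n ∈ T1 ↔ n ∈ T2))
        ∨ (k ∈ T2 ∧ (∀ n ∈ T2, n ≤ k) ∧ Ioi k ⊆ T1 ∧ k ∉ T1 ∧ ∀ n < k, (n ∈ T1 ↔ n ∈ T2))) := by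
  obtain ⟨k, hk, hlow⟩ := exists_least_diff hne
  rw [iff_iff_implies_and_implies, not_and_or] at hk
  push_neg at hk
  rcases hk with ⟨hk1, hk2⟩ | ⟨hk2, hk1⟩
  · obtain ⟨h1, h2⟩ := key h hk1 hk2 hlow
    refine ⟨k, Or.inl ⟨hk1, fun n hn => ?_, h2, hk2, hlow⟩⟩
    by_contra hgt
    have hmem : n ∈ T1 ∩ Ioi k := ⟨hn, not_le.1 hgt⟩
    rw [h1] at hmem
    exact hmem
  · obtain ⟨h1, h2⟩ := key h.symm hk2 hk1 (fun n hn => (hlow n hn).symm)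
    refine ⟨k, Or.inr ⟨hk2, fun n hn => ?_, h2, hk1, hlow⟩⟩
    by_contra hgt
    have hmem : n ∈ T2 ∩ Ioi k := ⟨hn, not_le.1 hgt⟩
    rw [h1] at hmem
    exact hmem

lemma not_hasMax_of_tail {T : Set ℕ} {k : ℕ} (h : Ioi k ⊆ T) : ¬ HasMax T := by
  rintro ⟨m, hm, hmax⟩
  have : k + m + 1 ∈ T := h (by simp [mem_Ioi])
  have := hmax _ this
  omega

lemma hasMax_xor {T1 T2 : Set ℕ} (h : d T1 = d T2) (hne : T1 ≠ T2) :
    (HasMax T1 ↔ ¬ HasMax T2) := by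
  obtain ⟨k, hs | hs⟩ := pair_structure h hne
  · obtain ⟨hk1, hmax, htail, _, _⟩ := hs
    exact iff_of_true ⟨k, hk1, hmax⟩ (not_hasMax_of_tail htail)
  · obtain ⟨hk2, hmax, htail, _, _⟩ := hs
    exact iff_of_false (not_hasMax_of_tail htail) (not_not.2 ⟨k, hk2, hmax⟩)

def F (s : ℝ) : Set (Set ℕ) := {T | d T = s}

lemma F_card_le (s : ℝ) : Cardinal.mk (F s) ≤ 2 := by
  have hsplit : F s = (F s ∩ {T | HasMax T}) ∪ (F s ∩ {T | ¬ HasMax T}) := by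
    ext T; by_cases h : HasMax T <;> simp [h]
  have h1 : (F s ∩ {T | HasMax T}).Subsingleton := by
    rintro T1 ⟨ha1, hb1⟩ T2 ⟨ha2, hb2⟩
    by_contra hne
    exact ((hasMax_xor (ha1.trans ha2.symm) hne).1 hb1) hb2
  have h2 : (F s ∩ {T | ¬ HasMax T}).Subsingleton := by
    rintro T1 ⟨ha1, hb1⟩ T2 ⟨ha2, hb2⟩
    by_contra hne
    exact hb1 ((hasMax_xor (ha1.trans ha2.symm) hne).2 hb2)
  rw [hsplit]
  refine le_trans (Cardinal.mk_union_le _ _) ?_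
  have := add_le_add (Cardinal.mk_le_one_iff_set_subsingleton.2 h1)
        (Cardinal.mk_le_one_iff_set_subsingleton.2 h2)
  rw [one_add_one_eq_two] at this
  exact this

lemma F_neg {s : ℝ} (h : s < 0) : F s = ∅ := by
  ext T; simp only [F, mem_setOf_eq, mem_empty_iff_false, iff_false]
  intro he
  exact absurd (he ▸ d_nonneg T) (not_le.2 h)

lemma F_zero : F 0 = {∅} := by
  ext T; simp only [F, mem_setOf_eq, mem_singleton_iff]
  constructor
  · exact d_eq_zero
  · rintro rfl; exact d_empty

/-- existence of a finite binary representation -/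
lemma exists_fin : ∀ m j : ℕ, j < 2 ^ m → ∃ T : Set ℕ, T ⊆ Iio m ∧ d T = j / 2 ^ m := by
  intro m
  induction m with
  | zero =>
    intro j hj
    interval_cases j
    exact ⟨∅, by simp, by simp [d_empty]⟩
  | succ m ih =>
    intro j hj
    rcases Nat.even_or_odd j with ⟨j', rfl⟩ | ⟨j', rfl⟩
    · obtain ⟨T, hT, hd⟩ := ih j' (by omega)
      refine ⟨T, hT.trans (Iio_subset_Iio (by omega)), ?_⟩
      rw [hd]
      rw [pow_succ]
      push_cast
      field_simp
      ring
    · obtain ⟨T, hT, hd⟩ := ih j' (by omega)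
      have hm : m ∉ T := fun hc => absurd (hT hc) (by simp)
      refine ⟨insert m T, ?_, ?_⟩
      · intro n hn
        rcases hn with rfl | hn
        · simp
        · exact (Iio_subset_Iio (by omega)) (hT hn)
      · rw [d_insert hm, hd]
        unfold y
        rw [pow_succ]
        push_cast
        field_simp
        ring

/-- For dyadic s in (0,1), F s is an explicit two-element set. -/
lemma F_dyadic {s : ℝ} (hpos : 0 < s) (j m : ℕ) (hj : j < 2 ^ m) (hs : s = j / 2 ^ m) :
    ∃ T1 T2 : Set ℕ, T1 ≠ T2 ∧ F s = {T1, T2} := by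
  obtain ⟨T, hTsub, hTd⟩ := exists_fin m j hj
  have hTne : T.Nonempty := by
    rw [nonempty_iff_ne_empty]
    rintro rfl
    rw [d_empty] at hTd
    rw [hs] at hpos
    linarith
  have hbdd : BddAbove T := ⟨m, fun n hn => (mem_Iio.1 (hTsub hn)).le⟩
  set k := sSup T with hk
  have hkT : k ∈ T := Nat.sSup_mem hTne hbdd
  have hkmax : ∀ n ∈ T, n ≤ k := fun n hn => le_csSup hbdd hn
  set T2 := (T \ {k}) ∪ Ioi k with hT2
  have hkT2 : k ∉ T2 := by simp [hT2]
  have hd2 : d T2 = d T := by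
    have hdis : Disjoint (T \ {k}) (Ioi k) := by
      rw [disjoint_left]
      intro n hn hn2
      exact absurd (hkmax n hn.1) (not_le.2 (mem_Ioi.1 hn2))
    rw [hT2, d_union hdis, d_Ioi]
    have : T = insert k (T \ {k}) := by
      rw [insert_diff_singleton]; exact (insert_eq_self.2 hkT).symm
    conv_rhs => rw [this]
    rw [d_insert (by simp)]
    ring
  refine ⟨T, T2, fun hc => hkT2 (hc ▸ hkT), ?_⟩
  ext U
  simp only [F, mem_setOf_eq, mem_insert_iff, mem_singleton_iff]
  constructor
  · intro hU
    by_cases hUT : U = T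
    · exact Or.inl hUT
    · right
      have heq : d U = d T := by rw [hU, hTd, hs]
      obtain ⟨k0, hstr | hstr⟩ := pair_structure heq hUT
      · -- U has max k0, T contains Ioi k0 : impossible since T ⊆ Iio m
        obtain ⟨_, _, htail, _, _⟩ := hstr
        have : k0 + m + 1 ∈ T := htail (by simp [mem_Ioi])
        have := mem_Iio.1 (hTsub this)
        omega
      · obtain ⟨hk0T, hk0max, htail, hk0U, hlow⟩ := hstr
        -- k0 is max of T, so k0 = k
        have hk0k : k0 = k := le_antisymm (hkmax _ hk0T) (hk0max _ hkT)
        rw [hk0k] at hk0U htail hlow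
        ext n
        rcases lt_trichotomy n k with h' | rfl | h'
        · simp only [hT2, mem_union, mem_diff, mem_singleton_iff, mem_Ioi]
          rw [← hlow n h']
          constructor
          · intro hn; exact Or.inl ⟨hn, by omega⟩
          · rintro (⟨hn, _⟩ | hn)
            · exact hn
            · omega
        · simp only [hT2, mem_union, mem_diff, mem_singleton_iff, mem_Ioi]
          constructor
          · intro hn; exact absurd hn hk0U
          · rintro (⟨_, hc⟩ | hc)
            · exact absurd trivial hc
            · exact absurd hc (lt_irrefl _)
        · simp only [hT2, mem_union, mem_Ioi]
          exact iff_of_true (htail (mem_Ioi.2 h')) (Or.inr h')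
  · rintro (rfl | rfl)
    · rw [hTd, hs]
    · rw [hd2, hTd, hs]

lemma F_card_dyadic {s : ℝ} (hpos : 0 < s) (j m : ℕ) (hj : j < 2 ^ m) (hs : s = j / 2 ^ m) :
    Cardinal.mk (F s) = 2 := by
  obtain ⟨T1, T2, hne, hF⟩ := F_dyadic hpos j m hj hs
  rw [hF]
  rw [show ({T1, T2} : Set (Set ℕ)) = insert T1 {T2} from rfl,
    Cardinal.mk_insert (by simpa using hne), Cardinal.mk_singleton]
  exact one_add_one_eq_two


/-! ### Glue with the sequence x -/

noncomputable def up (T : Set ℕ) : Set ℕ := (fun n => n + 1) '' T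

lemma zero_not_up (T : Set ℕ) : 0 ∉ up T := by
  simp only [up, mem_image]
  rintro ⟨m, _, hm⟩
  omega

lemma up_injective : Function.Injective up :=
  Set.image_injective.2 fun m n h => by omega

lemma shift_up (T : Set ℕ) : {n | n + 1 ∈ up T} = T := by
  ext n
  simp only [up, mem_setOf_eq, mem_image]
  constructor
  · rintro ⟨m, hm, h⟩; have : m = n := by omega
    exact this ▸ hm
  · intro h; exact ⟨n, h, rfl⟩

section Main
variable {a : ℝ} {x : ℕ → ℝ}

lemma x_summable (hx : ∀ n, 1 ≤ n → x n = 1 / 2 ^ n) : Summable x := by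
  refine (summable_nat_add_iff 1).1 (summable_y.congr fun n => ?_)
  rw [hx (n + 1) (by omega)]; rfl

lemma split (hx0 : x 0 = a) (hx : ∀ n, 1 ≤ n → x n = 1 / 2 ^ n) (S : Set ℕ) :
    ∑' n : S, x n = (if 0 ∈ S then a else 0) + d {n | n + 1 ∈ S} := by
  rw [tsum_subtype, Summable.tsum_eq_zero_add ((x_summable hx).indicator S)]
  congr 1
  · by_cases h : 0 ∈ S <;> simp [Set.indicator_apply, h, hx0]
  · unfold d
    apply tsum_congr
    intro n
    by_cases h : n + 1 ∈ S <;>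
      simp [Set.indicator_apply, h, mem_setOf_eq, hx (n + 1) (by omega), y]

lemma sum_up (hx0 : x 0 = a) (hx : ∀ n, 1 ≤ n → x n = 1 / 2 ^ n) (T : Set ℕ) :
    ∑' n : (up T), x n = d T := by
  rw [split hx0 hx, if_neg (zero_not_up T), shift_up, zero_add]

lemma sum_insert_up (hx0 : x 0 = a) (hx : ∀ n, 1 ≤ n → x n = 1 / 2 ^ n) (T : Set ℕ) :
    ∑' n : (insert 0 (up T) : Set ℕ), x n = a + d T := by
  rw [split hx0 hx, if_pos (mem_insert 0 _)]
  congr 2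
  have h2 : {n | n + 1 ∈ insert 0 (up T)} = {n | n + 1 ∈ up T} := by
    ext n
    simp only [mem_setOf_eq, mem_insert_iff]
    exact or_iff_right (by omega)
  rw [h2, shift_up]

lemma mem_ach (hx0 : x 0 = a) (hx : ∀ n, 1 ≤ n → x n = 1 / 2 ^ n) {T : Set ℕ} {t : ℝ}
    (hT : d T = t) : t ∈ achSet x :=
  ⟨up T, by rw [sum_up hx0 hx, hT]⟩

lemma fiber_eq (hx0 : x 0 = a) (hx : ∀ n, 1 ≤ n → x n = 1 / 2 ^ n) (t : ℝ) :
    {S : Set ℕ | ∑' n : S, x n = t} =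
      up '' F t ∪ (fun T => insert 0 (up T)) '' F (t - a) := by
  ext S
  simp only [mem_setOf_eq, mem_union, mem_image]
  constructor
  · intro hS
    rw [split hx0 hx] at hS
    by_cases h0 : 0 ∈ S
    · right
      refine ⟨{n | n + 1 ∈ S}, ?_, ?_⟩
      · rw [if_pos h0] at hS
        simp only [F, mem_setOf_eq]; linarith
      · ext n
        rcases n with _ | n
        · simpa using h0
        · simp only [mem_insert_iff, up, mem_image, mem_setOf_eq]
          constructor
          · rintro (h | ⟨m, hm, h⟩)
            · omega
            · have : m = n := by omega
              exact this ▸ hm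
          · intro h; exact Or.inr ⟨n, h, rfl⟩
    · left
      refine ⟨{n | n + 1 ∈ S}, ?_, ?_⟩
      · rw [if_neg h0, zero_add] at hS
        exact hS
      · ext n
        rcases n with _ | n
        · simp only [up, mem_image, mem_setOf_eq]
          constructor
          · rintro ⟨m, _, h⟩; omega
          · intro h; exact absurd h h0
        · simp only [up, mem_image, mem_setOf_eq]
          constructor
          · rintro ⟨m, hm, h⟩
            have : m = n := by omega
            exact this ▸ hm
          · intro h; exact ⟨n, h, rfl⟩
  · rintro (⟨T, hT, rfl⟩ | ⟨T, hT, rfl⟩)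
    · rw [sum_up hx0 hx, hT]
    · rw [sum_insert_up hx0 hx]
      simp only [F, mem_setOf_eq] at hT
      linarith

lemma cardFun_eq (hx0 : x 0 = a) (hx : ∀ n, 1 ≤ n → x n = 1 / 2 ^ n) (t : ℝ) :
    cardFun x t = Cardinal.mk (F t) + Cardinal.mk (F (t - a)) := by
  have h1 : cardFun x t = Cardinal.mk ↥{S : Set ℕ | ∑' n : S, x n = t} := rfl
  rw [h1, fiber_eq hx0 hx]
  have hdisj : Disjoint (up '' F t) ((fun T => insert 0 (up T)) '' F (t - a)) := by
    rw [disjoint_left]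
    rintro S ⟨T, _, rfl⟩ ⟨T', _, hT'⟩
    exact zero_not_up T (hT' ▸ mem_insert 0 _)
  rw [Cardinal.mk_union_of_disjoint hdisj,
    Cardinal.mk_image_eq_of_injOn _ _ up_injective.injOn,
    Cardinal.mk_image_eq_of_injOn _ _ ?_]
  intro T1 _ T2 _ h
  apply up_injective
  have h1 := congrArg (· \ {0}) h
  simpa [insert_diff_self_of_notMem, zero_not_up,
    diff_singleton_eq_self (zero_not_up T1), diff_singleton_eq_self (zero_not_up T2)] using h1

end Main
end S8

open S8 in
theorem stmt8 (a : ℝ) (ha : a ∈ Set.Ioo (0 : ℝ) 1) (had : IsDyadic a)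
    (x : ℕ → ℝ) (hx0 : x 0 = a) (hx : ∀ n, 1 ≤ n → x n = 1 / 2 ^ n) :
    cardFun x '' achSet x = {1, 2, 3, 4} := by

  obtain ⟨ha0, ha1⟩ := ha
  obtain ⟨K, M, hKM⟩ := had
  have h2M : (0:ℝ) < 2 ^ M := by positivity
  have hK0 : 0 < K := by
    rcases Nat.eq_zero_or_pos K with rfl | h
    · rw [hKM] at ha0; norm_num at ha0
    · exact h
  have hKlt : K < 2 ^ M := by
    by_contra h
    push_neg at h
    have h1 : (2:ℝ) ^ M ≤ (K:ℝ) := by exact_mod_cast (by exact_mod_cast h : ((2^M : ℕ):ℝ) ≤ K)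
    have : (1:ℝ) ≤ a := by rw [hKM, le_div_iff₀ h2M]; linarith
    linarith
  -- dyadic data for the four relevant positive values
  have mkFa : Cardinal.mk (F a) = 2 := F_card_dyadic ha0 K M hKlt hKM
  have ha2 : a / 2 = (K:ℝ) / 2 ^ (M+1) := by rw [hKM, pow_succ]; all_goals ring
  have mkFa2 : Cardinal.mk (F (a/2)) = 2 :=
    F_card_dyadic (by linarith) K (M+1) (by rw [pow_succ]; omega) ha2
  have hb : (1+a)/2 = ((2^M + K : ℕ):ℝ) / 2 ^ (M+1) := by
    rw [hKM]; push_cast; rw [pow_succ]; field_simp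
    all_goals ring
  have mkFb : Cardinal.mk (F ((1+a)/2)) = 2 :=
    F_card_dyadic (by linarith) (2^M + K) (M+1) (by rw [pow_succ]; omega) hb
  have hc : (1-a)/2 = ((2^M - K : ℕ):ℝ) / 2 ^ (M+1) := by
    rw [hKM]; rw [Nat.cast_sub hKlt.le]; push_cast; rw [pow_succ]; field_simp
    all_goals ring
  have mkFc : Cardinal.mk (F ((1-a)/2)) = 2 :=
    F_card_dyadic (by linarith) (2^M - K) (M+1) (by rw [pow_succ]; omega) hc
  have mkF0 : Cardinal.mk (F 0) = 1 := by rw [F_zero]; exact Cardinal.mk_singleton _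
  have mkneg : ∀ s : ℝ, s < 0 → Cardinal.mk (F s) = 0 := by
    intro s hs; rw [F_neg hs]; exact Cardinal.mk_emptyCollection _
  -- the four computed values
  have c0 : cardFun x 0 = 1 := by
    rw [cardFun_eq hx0 hx, mkF0, mkneg (0 - a) (by linarith), add_zero]
  have c2 : cardFun x (a/2) = 2 := by
    rw [cardFun_eq hx0 hx, mkFa2, mkneg (a/2 - a) (by linarith), add_zero]
  have c3 : cardFun x a = 3 := by
    rw [cardFun_eq hx0 hx, mkFa, sub_self, mkF0, two_add_one_eq_three]
  have c4 : cardFun x ((1+a)/2) = 4 := by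
    rw [cardFun_eq hx0 hx, mkFb, show (1+a)/2 - a = (1-a)/2 by ring, mkFc,
      two_add_two_eq_four]
  -- achSet membership of the four points
  have m0 : (0:ℝ) ∈ achSet x := mem_ach hx0 hx d_empty
  have m3 : a ∈ achSet x := by
    obtain ⟨T, _, hT⟩ := exists_fin M K hKlt
    exact mem_ach hx0 hx (hT.trans hKM.symm)
  have m2 : a/2 ∈ achSet x := by
    obtain ⟨T, _, hT⟩ := exists_fin (M+1) K (by rw [pow_succ]; omega)
    exact mem_ach hx0 hx (hT.trans ha2.symm)
  have m4 : (1+a)/2 ∈ achSet x := by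
    obtain ⟨T, _, hT⟩ := exists_fin (M+1) (2^M + K) (by rw [pow_succ]; omega)
    exact mem_ach hx0 hx (hT.trans hb.symm)
  ext c
  simp only [mem_image, mem_insert_iff, mem_singleton_iff]
  constructor
  · rintro ⟨t, ht, rfl⟩
    have h2a : (2 : Cardinal) < Cardinal.aleph0 := by simpa using Cardinal.nat_lt_aleph0 2
    obtain ⟨n1, hn1⟩ := Cardinal.lt_aleph0.1 ((F_card_le t).trans_lt h2a)
    obtain ⟨n2, hn2⟩ := Cardinal.lt_aleph0.1 ((F_card_le (t - a)).trans_lt h2a)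
    have hle1 : n1 ≤ 2 := by
      have := hn1 ▸ F_card_le t
      exact_mod_cast this
    have hle2 : n2 ≤ 2 := by
      have := hn2 ▸ F_card_le (t - a)
      exact_mod_cast this
    have hcf : cardFun x t = ((n1 + n2 : ℕ) : Cardinal) := by
      rw [cardFun_eq hx0 hx, hn1, hn2, Nat.cast_add]
    have hne : cardFun x t ≠ 0 := by
      obtain ⟨S, hS⟩ := ht
      exact Cardinal.mk_ne_zero_iff.2 ⟨⟨S, hS⟩⟩
    have hpos : n1 + n2 ≠ 0 := by
      intro h
      apply hne
      rw [hcf, h, Nat.cast_zero]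
    rw [hcf]
    have : n1 + n2 = 1 ∨ n1 + n2 = 2 ∨ n1 + n2 = 3 ∨ n1 + n2 = 4 := by omega
    rcases this with h|h|h|h <;> rw [h] <;> norm_num
  · rintro (rfl|rfl|rfl|rfl)
    · exact ⟨0, m0, c0⟩
    · exact ⟨a/2, m2, c2⟩
    · exact ⟨a, m3, c3⟩
    · exact ⟨(1+a)/2, m4, c4⟩
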